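/- Let f : ℝ^N × M^{m×N} → [0,+∞] be a normal integrand satisfying condition (C₁) with modulus ω. Then Zf satisfies the same condition with the same modulus: Zf(x₁,ξ) ≤ ω(|x₁−x₂|)(1 + Zf(x₂,ξ)) + Zf(x₂,ξ) for all x₁, x₂ ∈ ℝ^N and ξ ∈ M^{m×N}. -/

import Mathlib

open MeasureTheory Filter ENNReal Set

/-- The (sup-norm) gradient matrix of `φ` at `y`, as an `m × N` matrix. -/
noncomputable def grad {N m : ℕ} (φ : (Fin N → ℝ) → Fin m → ℝ) (y : Fin N → ℝ) :
    Fin m → Fin N → ℝ := fun i j => fderiv ℝ φ y (Pi.single j 1) i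

/-- The open unit cube `Y = (0,1)^N`. -/
def unitCube (N : ℕ) : Set (Fin N → ℝ) := Set.univ.pi fun _ => Set.Ioo 0 1

/-- A normal integrand: jointly measurable and lower semicontinuous in the matrix variable. -/
def NormalIntegrand {N m : ℕ} (f : (Fin N → ℝ) → (Fin m → Fin N → ℝ) → ℝ≥0∞) : Prop :=
  Measurable (Function.uncurry f) ∧ ∀ x, LowerSemicontinuous (f x)

/-- `W^{1,∞}_0(D;ℝ^m)` : Lipschitz maps vanishing on `∂D`. -/
def LipZero {N m : ℕ} (D : Set (Fin N → ℝ)) (φ : (Fin N → ℝ) → Fin m → ℝ) : Prop :=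
  (∃ K, LipschitzWith K φ) ∧ ∀ x ∈ frontier D, φ x = 0

/-- `Zf(x,ξ) = inf { ∫_Y f(x, ξ + ∇φ) : φ ∈ W^{1,∞}_0(Y;ℝ^m) }`. -/
noncomputable def Zfun {N m : ℕ} (f : (Fin N → ℝ) → (Fin m → Fin N → ℝ) → ℝ≥0∞)
    (x : Fin N → ℝ) (ξ : Fin m → Fin N → ℝ) : ℝ≥0∞ :=
  ⨅ (φ : (Fin N → ℝ) → Fin m → ℝ) (_ : LipZero (unitCube N) φ),
    ∫⁻ y in unitCube N, f x (ξ + grad φ y)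

/-- Serrin-type condition (C₁) with modulus `ω`. -/
def SerrinC1 {N m : ℕ} (f : (Fin N → ℝ) → (Fin m → Fin N → ℝ) → ℝ≥0∞) (ω : ℝ → ℝ) : Prop :=
  (∀ t, 0 ≤ ω t) ∧ ContinuousAt ω 0 ∧ ω 0 = 0 ∧
  ∀ (x₁ x₂ : Fin N → ℝ) (ξ : Fin m → Fin N → ℝ),
    f x₁ ξ ≤ ENNReal.ofReal (ω (dist x₁ x₂)) * (1 + f x₂ ξ) + f x₂ ξ

lemma vol_unitCube (N : ℕ) : (volume (unitCube N)) = 1 := by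
  rw [unitCube, volume_pi_pi]; simp [Real.volume_Ioo]

lemma measurable_grad {N m : ℕ} (φ : (Fin N → ℝ) → Fin m → ℝ) : Measurable (grad φ) := by
  unfold grad
  refine measurable_pi_lambda _ fun i => measurable_pi_lambda _ fun j => ?_
  exact ((ContinuousLinearMap.measurable_apply₂).comp
    ((measurable_fderiv ℝ φ).prodMk measurable_const)).comp measurable_id |>.eval

theorem stmt7 {N m : ℕ} (f : (Fin N → ℝ) → (Fin m → Fin N → ℝ) → ℝ≥0∞)
    (hf : NormalIntegrand f) (ω : ℝ → ℝ) (h : SerrinC1 f ω) :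
    ∀ (x₁ x₂ : Fin N → ℝ) (ξ : Fin m → Fin N → ℝ),
      Zfun f x₁ ξ ≤ ENNReal.ofReal (ω (dist x₁ x₂)) * (1 + Zfun f x₂ ξ) + Zfun f x₂ ξ := by
  obtain ⟨hω0, hωc, hω00, hC⟩ := h
  intro x₁ x₂ ξ
  set c := ENNReal.ofReal (ω (dist x₁ x₂)) with hc
  have hc_ne : c ≠ ∞ := ENNReal.ofReal_ne_top
  set Z := Zfun f x₂ ξ with hZ
  have key : ∀ φ : (Fin N → ℝ) → Fin m → ℝ, LipZero (unitCube N) φ →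
      Zfun f x₁ ξ ≤ c * (1 + ∫⁻ y in unitCube N, f x₂ (ξ + grad φ y))
        + ∫⁻ y in unitCube N, f x₂ (ξ + grad φ y) := by
    intro φ hφ
    have hmg : Measurable fun y => f x₂ (ξ + grad φ y) := by
      have h1 : Measurable (f x₂) := hf.1.comp measurable_prodMk_left
      exact h1.comp (measurable_const.add (measurable_grad φ))
    have h1 : Zfun f x₁ ξ ≤ ∫⁻ y in unitCube N, f x₁ (ξ + grad φ y) := iInf₂_le φ hφ
    refine h1.trans ?_
    calc ∫⁻ y in unitCube N, f x₁ (ξ + grad φ y)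
        ≤ ∫⁻ y in unitCube N,
            (c * (1 + f x₂ (ξ + grad φ y)) + f x₂ (ξ + grad φ y)) :=
          lintegral_mono fun y => hC x₁ x₂ _
      _ = c * (1 + ∫⁻ y in unitCube N, f x₂ (ξ + grad φ y))
            + ∫⁻ y in unitCube N, f x₂ (ξ + grad φ y) := by
          rw [lintegral_add_right _ hmg,
            lintegral_const_mul _ (f := fun y => 1 + f x₂ (ξ + grad φ y)) (measurable_const.add hmg),
            lintegral_add_left measurable_const, setLIntegral_const,
            vol_unitCube, one_mul]
  rcases eq_or_ne Z ∞ with hZtop | hZtop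
  · rw [hZtop]; simp
  · refine ENNReal.le_of_forall_pos_le_add fun ε hε hb => ?_
    set δ : ℝ≥0∞ := (ε : ℝ≥0∞) / (c + 1) with hδ
    have hδpos : 0 < δ := ENNReal.div_pos (by exact_mod_cast hε.ne') (by simp [hc_ne])
    have : Z < Z + δ := ENNReal.lt_add_right hZtop hδpos.ne'
    obtain ⟨φ, hφZ⟩ := iInf_lt_iff.mp (hZ ▸ this)
    obtain ⟨hφ, hφI⟩ := iInf_lt_iff.mp hφZ
    have hI : (∫⁻ y in unitCube N, f x₂ (ξ + grad φ y)) ≤ Z + δ := hφI.le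
    have h2 : Zfun f x₁ ξ ≤ c * (1 + (Z + δ)) + (Z + δ) := by
      refine (key φ hφ).trans ?_
      gcongr
    refine h2.trans ?_
    have hring : c * (1 + (Z + δ)) + (Z + δ) = (c * (1 + Z) + Z) + (c + 1) * δ := by ring
    rw [hring]
    gcongr
    calc (c + 1) * δ = (c + 1) * ((ε : ℝ≥0∞) / (c + 1)) := rfl
      _ ≤ ε := ENNReal.mul_div_le
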